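/- Let N = (P,T,F) be a continuous Petri net, let m_src, m_tgt ∈ (ℝ≥0)^P, and let S ⊆ S' ⊆ T. If no vector x ∈ (ℝ≥0)^T satisfies S ⊆ supp(x) ⊆ S' and m_src + F·x = m_tgt, then there exists a linear exclusion function for (S,S') (relative to m_src and m_tgt), i.e., a vector y ∈ ℝ^P such that f(m) := yᵀm is an exclusion function for (S,S'). -/

import Mathlib

/-- A continuous Petri net `N = (P, T, F)` with places `P`, transitions `T`,
and flow matrices `F₋, F₊ : P × T → ℕ`. -/
structure PetriNet (P T : Type*) where
  Fminus : P → T → ℕ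
  Fplus : P → T → ℕ

namespace PetriNet

variable {P T : Type*}

/-- `pre(t)`: the column of `F₋` associated to transition `t`, as a real vector. -/
def pre (N : PetriNet P T) (t : T) : P → ℝ := fun p => (N.Fminus p t : ℝ)

/-- `post(t)`: the column of `F₊` associated to transition `t`, as a real vector. -/
def post (N : PetriNet P T) (t : T) : P → ℝ := fun p => (N.Fplus p t : ℝ)

/-- The transpose net `N^T := (P, T, (F₊, F₋))`. -/
def transpose (N : PetriNet P T) : PetriNet P T := ⟨N.Fplus, N.Fminus⟩

/-- `m →(αt) m'` : transition `t` is `α`-fired (α > 0) from `m`, leading to `m'`. -/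
def fire (N : PetriNet P T) (t : T) (α : ℝ) (m m' : P → ℝ) : Prop :=
  0 < α ∧ (∀ p, α * N.pre t p ≤ m p) ∧
    ∀ p, m' p = m p + α * (N.post t p - N.pre t p)

/-- Firing a sequence `σ = α₁t₁ ⋯ αₙtₙ` (a list of (amount, transition) pairs)
from `m` to `m'`. -/
def fireSeq (N : PetriNet P T) : List (ℝ × T) → (P → ℝ) → (P → ℝ) → Prop
  | [], m, m' => m = m'
  | (α, t) :: σ, m, m' => ∃ m₁, N.fire t α m m₁ ∧ N.fireSeq σ m₁ m'

/-- The support of a firing sequence: the set of transitions occurring in it. -/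
def seqSupport (σ : List (ℝ × T)) : Set T := {t | ∃ α : ℝ, (α, t) ∈ σ}

end PetriNet

namespace PetriNet

variable {P T : Type*}

/-- `f` is an exclusion function for `(S, S')` relative to `msrc` and `mtgt`. -/
def IsExclusionFun (N : PetriNet P T) (S S' : Set T) (msrc mtgt : P → ℝ)
    (f : (P → ℝ) → ℝ) : Prop :=
  (∀ t ∈ S', ∀ (α : ℝ) (m m' : P → ℝ), N.fire t α m m' → f m ≤ f m') ∧
  (f mtgt < f msrc ∨
    (f msrc = f mtgt ∧
      ∃ t ∈ S, ∀ (α : ℝ) (m m' : P → ℝ), N.fire t α m m' → f m < f m'))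

end PetriNet

/-- Dot product of two real vectors indexed by a fintype. -/
def dotp {P : Type*} [Fintype P] (y v : P → ℝ) : ℝ := ∑ p, y p * v p

lemma dotp_sub_smul {P : Type*} [Fintype P] (y u w : P → ℝ) (c : ℝ) :
    dotp y (fun p => u p - c * w p) = dotp y u - c * dotp y w := by
  simp only [dotp, Finset.mul_sum, ← Finset.sum_sub_distrib]
  exact Finset.sum_congr rfl fun p _ => by ring

lemma dotp_sub_smul_left {P : Type*} [Fintype P] (z y w : P → ℝ) (c : ℝ) :
    dotp (fun p => z p - c * y p) w = dotp z w - c * dotp y w := by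
  simp only [dotp, Finset.mul_sum, ← Finset.sum_sub_distrib]
  exact Finset.sum_congr rfl fun p _ => by ring

/-- Farkas' lemma, conic form, by induction on the generating set. -/
lemma farkas {P ι : Type*} [Fintype P] [DecidableEq ι] (A : Finset ι)
    (v : ι → P → ℝ) (b : P → ℝ) :
    (∃ c : ι → ℝ, (∀ i, 0 ≤ c i) ∧ (∀ i ∉ A, c i = 0) ∧
        (∀ p, ∑ i ∈ A, c i * v i p = b p)) ∨
    (∃ y : P → ℝ, (∀ i ∈ A, 0 ≤ dotp y (v i)) ∧ dotp y b < 0) := by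
  classical
  induction A using Finset.induction generalizing v b with
  | empty =>
    by_cases hb : ∀ p, b p = 0
    · exact Or.inl ⟨0, fun i => le_refl 0, fun i _ => rfl, fun p => by simp [hb p]⟩
    · push_neg at hb
      obtain ⟨p₀, hp₀⟩ := hb
      refine Or.inr ⟨fun p => -b p, by simp, ?_⟩
      have h1 : dotp (fun p => -b p) b = -∑ p, b p * b p := by
        simp only [dotp, ← Finset.sum_neg_distrib]
        exact Finset.sum_congr rfl fun p _ => by ring
      have h2 : 0 < ∑ p, b p * b p :=
        Finset.sum_pos' (fun p _ => mul_self_nonneg _)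
          ⟨p₀, Finset.mem_univ _, mul_self_pos.mpr hp₀⟩
      rw [h1]; linarith
  | @insert a A' ha ih =>
    rcases ih v b with ⟨c, hc0, hcz, hsum⟩ | ⟨y, hy, hyb⟩
    · -- b is already in the cone of A'
      refine Or.inl ⟨fun i => if i = a then 0 else c i, ?_, ?_, ?_⟩
      · intro i; by_cases h : i = a <;> simp [h, hc0 i]
      · intro i hi
        have hia : i ≠ a := fun h => hi (h ▸ Finset.mem_insert_self a A')
        have hiA : i ∉ A' := fun h => hi (Finset.mem_insert_of_mem h)
        simp [hia, hcz i hiA]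
      · intro p
        rw [Finset.sum_insert ha]
        beta_reduce
        rw [if_pos rfl, zero_mul, zero_add]
        rw [← hsum p]
        have he : ∑ i ∈ A', (if i = a then (0:ℝ) else c i) * v i p
            = ∑ i ∈ A', c i * v i p :=
          Finset.sum_congr rfl fun i hi => by
            have hia : i ≠ a := fun h => ha (h ▸ hi)
            rw [if_neg hia]
        exact he
    · by_cases hva : 0 ≤ dotp y (v a)
      · refine Or.inr ⟨y, ?_, hyb⟩
        intro i hi
        rcases Finset.mem_insert.mp hi with h | h
        · exact h ▸ hva
        · exact hy i h
      · push_neg at hva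
        set d := dotp y (v a) with hd
        have hdne : d ≠ 0 := ne_of_lt hva
        set v' : ι → P → ℝ := fun i p => v i p - dotp y (v i) / d * v a p with hv'
        set b' : P → ℝ := fun p => b p - dotp y b / d * v a p with hb'
        rcases ih v' b' with ⟨c, hc0, hcz, hsum⟩ | ⟨z, hz, hzb⟩
        · -- reconstruct a conic combination for b
          set lam := (dotp y b - ∑ i ∈ A', c i * dotp y (v i)) / d with hlam
          have hsumnn : 0 ≤ ∑ i ∈ A', c i * dotp y (v i) :=
            Finset.sum_nonneg fun i hi => mul_nonneg (hc0 i) (hy i hi)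
          have hlamnn : 0 ≤ lam := by
            rw [div_nonneg_iff]
            right
            constructor
            · linarith
            · exact le_of_lt hva
          refine Or.inl ⟨fun i => if i = a then lam else c i, ?_, ?_, ?_⟩
          · intro i; by_cases h : i = a <;> simp [h, hc0 i, hlamnn]
          · intro i hi
            have hia : i ≠ a := fun h => hi (h ▸ Finset.mem_insert_self a A')
            have hiA : i ∉ A' := fun h => hi (Finset.mem_insert_of_mem h)
            simp [hia, hcz i hiA]
          · intro p
            rw [Finset.sum_insert ha]
            beta_reduce
            rw [if_pos rfl]
            have he : ∑ i ∈ A', (if i = a then lam else c i) * v i p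
                = ∑ i ∈ A', c i * v i p := by
              exact Finset.sum_congr rfl fun i hi => by
                have hia : i ≠ a := fun h => ha (h ▸ hi)
                rw [if_neg hia]
            rw [he]
            have h1 := hsum p
            simp only [hv', hb'] at h1
            have h2 : ∑ i ∈ A', c i * (v i p - dotp y (v i) / d * v a p)
                = ∑ i ∈ A', c i * v i p
                  - (∑ i ∈ A', c i * dotp y (v i)) / d * v a p := by
              rw [Finset.sum_div, Finset.sum_mul, ← Finset.sum_sub_distrib]
              exact Finset.sum_congr rfl fun i hi => by ring
            rw [h2] at h1
            have : ∑ i ∈ A', c i * v i p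
                = b p - dotp y b / d * v a p
                  + (∑ i ∈ A', c i * dotp y (v i)) / d * v a p := by linarith
            rw [this, hlam]
            field_simp
            ring
        · -- reconstruct a separating vector
          refine Or.inr ⟨fun p => z p - dotp z (v a) / d * y p, ?_, ?_⟩
          · intro i hi
            rw [dotp_sub_smul_left]
            rcases Finset.mem_insert.mp hi with h | h
            · subst h
              rw [div_mul_cancel₀ _ hdne]; simp
            · have := hz i h
              rw [hv'] at this
              rw [dotp_sub_smul] at this
              -- this : 0 ≤ dotp z (v i) - dotp y (v i) / d * dotp z (v a)
              have heq : dotp z (v i) - dotp z (v a) / d * dotp y (v i)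
                  = dotp z (v i) - dotp y (v i) / d * dotp z (v a) := by ring
              rw [heq]; exact this
          · rw [dotp_sub_smul_left]
            have := hzb
            rw [hb', dotp_sub_smul] at this
            have heq : dotp z b - dotp z (v a) / d * dotp y b
                = dotp z b - dotp y b / d * dotp z (v a) := by ring
            rw [heq]; exact this

/-- Column `t` of the flow matrix `F = F₊ - F₋`, as a real vector. -/
def colF {P T : Type*} (N : PetriNet P T) (t : T) (p : P) : ℝ :=
  N.post t p - N.pre t p

/-- Auxiliary generator family for the second Farkas application. -/
def wAux2 {P T : Type*} [DecidableEq T] (N : PetriNet P T) (b : P → ℝ) (t₀ : T) :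
    Option T → Option P → ℝ
  | some t, some p => colF N t p
  | some t, none => if t = t₀ then 1 else 0
  | none, some p => -(b p)
  | none, none => 0

/-- Auxiliary target vector for the second Farkas application. -/
def eAux (P : Type*) : Option P → ℝ
  | some _ => 0
  | none => 1

lemma dotp_option {P : Type*} [Fintype P] (y v : Option P → ℝ) :
    dotp y v = y none * v none + ∑ p, y (some p) * v (some p) := by
  rw [dotp, Fintype.sum_option]

lemma fire_dot {P T : Type*} [Fintype P] (N : PetriNet P T) {t : T} {α : ℝ}
    {m m' : P → ℝ} (hf : N.fire t α m m') (y : P → ℝ) :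
    (∑ p, y p * m' p) = (∑ p, y p * m p) + α * ∑ p, y p * colF N t p := by
  obtain ⟨_, _, heq⟩ := hf
  rw [Finset.mul_sum, ← Finset.sum_add_distrib]
  apply Finset.sum_congr rfl
  intro p _
  rw [heq p, colF]
  ring

open PetriNet

/-- If no vector `x ≥ 0` satisfies `S ⊆ supp(x) ⊆ S'` and `msrc + F x = mtgt`,
then there exists a linear exclusion function for `(S, S')`. -/
theorem exists_linear_exclusionFun
    {P T : Type*} [Fintype P] [Fintype T]
    (N : PetriNet P T) (msrc mtgt : P → ℝ)
    (hsrc : 0 ≤ msrc) (htgt : 0 ≤ mtgt)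
    (S S' : Set T) (hSS' : S ⊆ S')
    (h : ¬ ∃ x : T → ℝ, 0 ≤ x ∧ S ⊆ {t | 0 < x t} ∧ {t | 0 < x t} ⊆ S' ∧
        ∀ p, msrc p + ∑ t : T, (N.post t p - N.pre t p) * x t = mtgt p) :
    ∃ y : P → ℝ,
      IsExclusionFun N S S' msrc mtgt (fun m => ∑ p : P, y p * m p) := by
  classical
  have hcard : (0:ℝ) < (S.toFinset.card : ℝ) + 1 := by positivity
  rcases farkas (P := P) (ι := T) S'.toFinset (colF N)
      (fun p => mtgt p - msrc p) with
    ⟨c, hc0, hcz, hcsum⟩ | ⟨y, hy, hyb⟩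
  · -- `mtgt - msrc` is in the cone generated by the columns in `S'`.
    -- A "solution" is a nonneg vector supported in `S'` with `F x = mtgt - msrc`.
    set Sol : (T → ℝ) → Prop := fun x =>
      (∀ t, 0 ≤ x t) ∧ (∀ t ∉ S'.toFinset, x t = 0) ∧
        (∀ p, ∑ t ∈ S'.toFinset, x t * colF N t p = mtgt p - msrc p) with hSoldef
    have hSolc : Sol c := ⟨hc0, hcz, hcsum⟩
    -- No solution can have full support on S (else `h` is contradicted).
    have hnot : ∀ x : T → ℝ, Sol x → ¬ (∀ t ∈ S, 0 < x t) := by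
      intro x hx hsub
      obtain ⟨hx0, hxz, hxs⟩ := hx
      refine h ⟨x, Pi.le_def.mpr fun t => hx0 t, hsub, ?_, ?_⟩
      · intro t ht
        by_contra htS'
        have hz : x t = 0 := hxz t (fun hmem => htS' (Set.mem_toFinset.mp hmem))
        rw [Set.mem_setOf_eq, hz] at ht
        exact lt_irrefl 0 ht
      · intro p
        have e1 : ∑ t : T, (N.post t p - N.pre t p) * x t
            = ∑ t ∈ S'.toFinset, x t * colF N t p := by
          rw [← Finset.sum_subset (Finset.subset_univ S'.toFinset)
            (fun t _ ht => by rw [hxz t ht, mul_zero])]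
          apply Finset.sum_congr rfl
          intro t _
          rw [colF]
          ring
        rw [e1, hxs p]
        ring
    -- Find `t₀ ∈ S` vanishing on every solution.
    have hstep2 : ∃ t₀ ∈ S, ∀ x : T → ℝ, Sol x → x t₀ = 0 := by
      by_contra hcon
      push_neg at hcon
      choose! g hg1 hg2 using hcon
      set x : T → ℝ :=
        fun u => (c u + ∑ t ∈ S.toFinset, g t u) / ((S.toFinset.card : ℝ) + 1)
        with hxdef
      have hxu : ∀ u, x u
          = (c u + ∑ t ∈ S.toFinset, g t u) / ((S.toFinset.card : ℝ) + 1) :=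
        fun u => rfl
      have hx0 : ∀ u, 0 ≤ x u := by
        intro u
        rw [hxu u]
        apply div_nonneg _ (le_of_lt hcard)
        refine add_nonneg (hc0 u) (Finset.sum_nonneg fun t ht => ?_)
        exact (hg1 t (Set.mem_toFinset.mp ht)).1 u
      have hxz : ∀ u ∉ S'.toFinset, x u = 0 := by
        intro u hu
        rw [hxu u, hcz u hu,
          Finset.sum_eq_zero fun t ht => (hg1 t (Set.mem_toFinset.mp ht)).2.1 u hu]
        norm_num
      have hxs : ∀ p, ∑ u ∈ S'.toFinset, x u * colF N u p = mtgt p - msrc p := by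
        intro p
        have e1 : ∑ u ∈ S'.toFinset, x u * colF N u p
            = (∑ u ∈ S'.toFinset,
                (c u * colF N u p + ∑ t ∈ S.toFinset, g t u * colF N u p))
              / ((S.toFinset.card : ℝ) + 1) := by
          rw [Finset.sum_div]
          apply Finset.sum_congr rfl
          intro u _
          rw [hxu u, div_mul_eq_mul_div, add_mul, Finset.sum_mul]
        have e2 : ∑ u ∈ S'.toFinset,
              (c u * colF N u p + ∑ t ∈ S.toFinset, g t u * colF N u p)
            = (mtgt p - msrc p)
              + (S.toFinset.card : ℝ) * (mtgt p - msrc p) := by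
          rw [Finset.sum_add_distrib, hcsum p, Finset.sum_comm]
          have e3 : ∑ t ∈ S.toFinset, ∑ u ∈ S'.toFinset, g t u * colF N u p
              = ∑ t ∈ S.toFinset, (mtgt p - msrc p) := by
            apply Finset.sum_congr rfl
            intro t ht
            exact (hg1 t (Set.mem_toFinset.mp ht)).2.2 p
          rw [e3, Finset.sum_const, nsmul_eq_mul]
        have hne : ((S.toFinset.card : ℝ) + 1) ≠ 0 := ne_of_gt hcard
        rw [e1, e2]
        field_simp
        ring
      refine hnot x ⟨hx0, hxz, hxs⟩ ?_
      intro t ht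
      have h2 : 0 ≤ g t t := (hg1 t ht).1 t
      have h4 : 0 < g t t := lt_of_le_of_ne h2 (Ne.symm (hg2 t ht))
      have h3 : g t t ≤ ∑ s ∈ S.toFinset, g s t :=
        Finset.single_le_sum (f := fun s => g s t)
          (fun s hs => (hg1 s (Set.mem_toFinset.mp hs)).1 t) (Set.mem_toFinset.mpr ht)
      rw [hxu t]
      apply div_pos _ hcard
      have h5 := hc0 t
      linarith
    obtain ⟨t₀, ht₀S, ht₀⟩ := hstep2
    have ht₀S' : t₀ ∈ S'.toFinset := Set.mem_toFinset.mpr (hSS' ht₀S)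
    -- Second Farkas application in `Option P`.
    rcases farkas (P := Option P) (ι := Option T) S'.toFinset.insertNone
        (wAux2 N (fun p => mtgt p - msrc p) t₀) (eAux P) with
      ⟨c2, hc20, hc2z, hc2sum⟩ | ⟨y2, hy2, hy2e⟩
    · -- impossible: it would produce a solution positive at t₀
      exfalso
      have hnone := hc2sum none
      rw [Finset.sum_insertNone] at hnone
      simp only [wAux2, eAux, mul_zero, zero_add] at hnone
      have e3 : ∑ t ∈ S'.toFinset, c2 (some t) * (if t = t₀ then (1:ℝ) else 0)
          = ∑ t ∈ S'.toFinset, (if t = t₀ then c2 (some t) else 0) := by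
        apply Finset.sum_congr rfl
        intro t _
        rw [mul_ite, mul_one, mul_zero]
      rw [e3, Finset.sum_ite_eq' _ t₀ _, if_pos ht₀S'] at hnone
      have hsome : ∀ p, c2 none * (-(mtgt p - msrc p))
          + ∑ t ∈ S'.toFinset, c2 (some t) * colF N t p = 0 := by
        intro p
        have h5 := hc2sum (some p)
        rw [Finset.sum_insertNone] at h5
        simpa [wAux2, eAux] using h5
      have hlam0 : 0 ≤ c2 none := hc20 none
      have h1lam : (0:ℝ) < 1 + c2 none := by linarith
      set x2 : T → ℝ := fun t => (c t + c2 (some t)) / (1 + c2 none) with hx2def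
      have hx2u : ∀ t, x2 t = (c t + c2 (some t)) / (1 + c2 none) := fun t => rfl
      have hx2Sol : Sol x2 := by
        refine ⟨?_, ?_, ?_⟩
        · intro t
          exact div_nonneg (add_nonneg (hc0 t) (hc20 (some t))) (le_of_lt h1lam)
        · intro t ht
          rw [hx2u t, hcz t ht,
            hc2z (some t) (fun hmem => ht (Finset.some_mem_insertNone.mp hmem))]
          norm_num
        · intro p
          have e4 : ∑ t ∈ S'.toFinset, c2 (some t) * colF N t p
              = c2 none * (mtgt p - msrc p) := by
            have := hsome p
            linarith
          have e5 : ∑ t ∈ S'.toFinset, x2 t * colF N t p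
              = (∑ t ∈ S'.toFinset,
                  (c t * colF N t p + c2 (some t) * colF N t p)) / (1 + c2 none) := by
            rw [Finset.sum_div]
            apply Finset.sum_congr rfl
            intro t _
            rw [hx2u t, div_mul_eq_mul_div, add_mul]
          rw [e5, Finset.sum_add_distrib, hcsum p, e4]
          field_simp
      have h6 := ht₀ x2 hx2Sol
      have h7 : 0 < x2 t₀ := by
        rw [hx2u t₀, hnone]
        apply div_pos _ h1lam
        have := hc0 t₀
        linarith
      rw [h6] at h7
      exact lt_irrefl 0 h7
    · -- extract the exclusion vector
      have hβ : y2 none < 0 := by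
        have h5 := hy2e
        rw [dotp_option] at h5
        simpa [eAux] using h5
      have hdual : ∀ t ∈ S'.toFinset,
          0 ≤ y2 none * (if t = t₀ then (1:ℝ) else 0)
            + ∑ p, y2 (some p) * colF N t p := by
        intro t ht
        have h5 := hy2 (some t) (Finset.some_mem_insertNone.mpr ht)
        rw [dotp_option] at h5
        simpa [wAux2] using h5
      have hpos : ∀ t ∈ S'.toFinset, 0 ≤ ∑ p, y2 (some p) * colF N t p := by
        intro t ht
        have h5 := hdual t ht
        by_cases h' : t = t₀
        · rw [if_pos h'] at h5
          linarith
        · rw [if_neg h'] at h5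
          linarith
      have hstrict : 0 < ∑ p, y2 (some p) * colF N t₀ p := by
        have h5 := hdual t₀ ht₀S'
        rw [if_pos rfl] at h5
        linarith
      have hble : (∑ p, y2 (some p) * (mtgt p - msrc p)) ≤ 0 := by
        have h5 := hy2 none Finset.none_mem_insertNone
        rw [dotp_option] at h5
        simp only [wAux2, mul_zero, zero_add] at h5
        have e6 : ∑ p, y2 (some p) * (-(mtgt p - msrc p))
            = -∑ p, y2 (some p) * (mtgt p - msrc p) := by
          rw [← Finset.sum_neg_distrib]
          apply Finset.sum_congr rfl
          intro p _
          ring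
        rw [e6] at h5
        linarith
      have hbge : 0 ≤ ∑ p, y2 (some p) * (mtgt p - msrc p) := by
        have e7 : ∑ p, y2 (some p) * (mtgt p - msrc p)
            = ∑ t ∈ S'.toFinset, c t * ∑ p, y2 (some p) * colF N t p := by
          have e8 : ∀ p : P, y2 (some p) * (mtgt p - msrc p)
              = ∑ t ∈ S'.toFinset, c t * (y2 (some p) * colF N t p) := by
            intro p
            rw [← hcsum p, Finset.mul_sum]
            apply Finset.sum_congr rfl
            intro t _
            ring
          rw [Finset.sum_congr rfl fun p _ => e8 p, Finset.sum_comm]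
          apply Finset.sum_congr rfl
          intro t _
          rw [Finset.mul_sum]
        rw [e7]
        exact Finset.sum_nonneg fun t ht => mul_nonneg (hc0 t) (hpos t ht)
      have hbzero : ∑ p, y2 (some p) * (mtgt p - msrc p) = 0 :=
        le_antisymm hble hbge
      refine ⟨fun p => y2 (some p), ?_, Or.inr ⟨?_, t₀, ht₀S, ?_⟩⟩
      · intro t ht α m m' hf
        have he := fire_dot N hf (fun p => y2 (some p))
        have hd := hpos t (Set.mem_toFinset.mpr ht)
        have hα := hf.1
        simp only []
        nlinarith
      · have e9 : ∑ p, y2 (some p) * (mtgt p - msrc p)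
            = (∑ p, y2 (some p) * mtgt p) - ∑ p, y2 (some p) * msrc p := by
          rw [← Finset.sum_sub_distrib]
          apply Finset.sum_congr rfl
          intro p _
          ring
        rw [e9] at hbzero
        simp only []
        linarith
      · intro α m m' hf
        have he := fire_dot N hf (fun p => y2 (some p))
        have hα := hf.1
        simp only []
        nlinarith
  · -- strictly separating hyperplane: first disjunct
    refine ⟨y, ?_, Or.inl ?_⟩
    · intro t ht α m m' hf
      have he := fire_dot N hf y
      have hd := hy t (Set.mem_toFinset.mpr ht)
      rw [dotp] at hd
      have hα := hf.1
      simp only []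
      nlinarith
    · have e1 : dotp y (fun p => mtgt p - msrc p)
          = (∑ p, y p * mtgt p) - ∑ p, y p * msrc p := by
        rw [dotp, ← Finset.sum_sub_distrib]
        apply Finset.sum_congr rfl
        intro p _
        ring
      rw [e1] at hyb
      simp only []
      linarith
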